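/- arXiv:2106.12429 — 2 statements merged into one kernel-verified Lean document; each statement's English description precedes it below -/
import Mathlib

section
/- For every real number η⁻, the integral ∫_{-∞}^{∞} x · (1/√(2π)) · exp(−x²/2) · ( η⁻ + 2(1 − η⁻) · ∫_{-∞}^{x} (1/√(2π)) · exp(−y²/2) dy ) dx equals (1 − η⁻)/√π. (In the paper's terminology: the standardized selection pressure of linear ranking selection with worst-selection parameter η⁻, applied to a standard Gaussian fitness distribution, equals S_R(η⁻) = (1 − η⁻)·(1/√π).) -/
open Real MeasureTheory Filter Set

noncomputable def phi (x : ℝ) : ℝ := (1 / Real.sqrt (2 * Real.pi)) * Real.exp (-x ^ 2 / 2)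

lemma phi_eq (x : ℝ) : phi x = (1 / Real.sqrt (2 * Real.pi)) * Real.exp (-(1/2) * x ^ 2) := by
  unfold phi; ring_nf

lemma integrable_phi : Integrable phi := by
  have := (integrable_exp_neg_mul_sq (by norm_num : (0:ℝ) < 1/2)).const_mul (1 / Real.sqrt (2 * Real.pi))
  refine this.congr (ae_of_all _ fun x => ?_)
  rw [phi_eq]

lemma integral_phi : ∫ x, phi x = 1 := by
  have h : ∫ x : ℝ, Real.exp (-(1/2) * x ^ 2) = Real.sqrt (Real.pi / (1/2)) :=
    integral_gaussian (1/2)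
  have : ∫ x, phi x = (1 / Real.sqrt (2 * Real.pi)) * ∫ x : ℝ, Real.exp (-(1/2) * x ^ 2) := by
    rw [← integral_const_mul]; exact integral_congr_ae (ae_of_all _ fun x => phi_eq x)
  rw [this, h]
  have : Real.pi / (1/2) = 2 * Real.pi := by ring
  rw [this]
  rw [one_div_mul_eq_div, div_self]
  positivity

noncomputable def Phi (x : ℝ) : ℝ := ∫ y in Set.Iic x, phi y

lemma phi_nonneg (x : ℝ) : 0 ≤ phi x := by unfold phi; positivity

lemma Phi_nonneg (x : ℝ) : 0 ≤ Phi x := setIntegral_nonneg measurableSet_Iic fun y _ => phi_nonneg y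

lemma Phi_le_one (x : ℝ) : Phi x ≤ 1 := by
  rw [← integral_phi]
  exact setIntegral_le_integral integrable_phi (ae_of_all _ phi_nonneg)

lemma continuous_phi : Continuous phi := by
  unfold phi; continuity

lemma hasDerivAt_Phi (x : ℝ) : HasDerivAt Phi (phi x) x := by
  have key : ∀ u : ℝ, Phi u = Phi 0 + ∫ t in (0:ℝ)..u, phi t := by
    intro u
    have := intervalIntegral.integral_Iic_sub_Iic (μ := volume) (f := phi)
      integrable_phi.integrableOn integrable_phi.integrableOn (a := 0) (b := u)
    unfold Phi; linarith [this]
  have h1 : HasDerivAt (fun u => Phi 0 + ∫ t in (0:ℝ)..u, phi t) (phi x) x := by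
    refine HasDerivAt.const_add _ ?_
    exact intervalIntegral.integral_hasDerivAt_right
      integrable_phi.intervalIntegrable
      (continuous_phi.stronglyMeasurableAtFilter _ _)
      continuous_phi.continuousAt
  have : Phi = fun u => Phi 0 + ∫ t in (0:ℝ)..u, phi t := funext key
  rw [this]; exact h1

lemma tendsto_phi_atTop : Tendsto phi atTop (nhds 0) := by
  have hsq : Tendsto (fun x : ℝ => -x ^ 2 / 2) atTop atBot := by
    apply Tendsto.atBot_div_const (by norm_num)
    apply tendsto_neg_atTop_atBot.comp
    exact tendsto_pow_atTop (by norm_num)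
  have h := (Real.tendsto_exp_atBot.comp hsq).const_mul (1 / Real.sqrt (2 * Real.pi))
  rw [mul_zero] at h
  exact h.congr fun x => rfl

lemma tendsto_phi_atBot : Tendsto phi atBot (nhds 0) := by
  have h : ∀ x : ℝ, phi (-x) = phi x := by intro x; unfold phi; ring_nf
  have := tendsto_phi_atTop.comp tendsto_neg_atBot_atTop
  refine this.congr fun x => ?_
  simp [Function.comp, h]

lemma tendsto_Phi_atTop : Tendsto Phi atTop (nhds 1) := by
  rw [← integral_phi]
  exact (aecover_Iic (μ := volume) tendsto_id).integral_tendsto_of_countably_generated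
    integrable_phi

lemma tendsto_Phi_atBot : Tendsto Phi atBot (nhds 0) := by
  have hIoi : Tendsto (fun x : ℝ => ∫ y in Set.Ioi x, phi y) atBot (nhds (∫ y, phi y)) :=
    (aecover_Ioi (μ := volume) tendsto_id).integral_tendsto_of_countably_generated
      integrable_phi
  have key : ∀ x : ℝ, Phi x = (∫ y, phi y) - ∫ y in Set.Ioi x, phi y := by
    intro x
    have := setIntegral_union (f := phi) (μ := volume)
      (Iic_disjoint_Ioi (le_refl x)) measurableSet_Ioi
      integrable_phi.integrableOn integrable_phi.integrableOn
    rw [Set.Iic_union_Ioi, setIntegral_univ] at this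
    unfold Phi; linarith
  have : Phi = fun x => (∫ y, phi y) - ∫ y in Set.Ioi x, phi y := funext key
  rw [this]
  simpa using (tendsto_const_nhds (x := ∫ y, phi y)).sub hIoi

lemma hasDerivAt_phi (x : ℝ) : HasDerivAt phi (-x * phi x) x := by
  have hu : HasDerivAt (fun x : ℝ => -x ^ 2 / 2) (-x) x := by
    have h := ((hasDerivAt_pow 2 x).neg.div_const 2)
    refine h.congr_deriv ?_
    norm_num
    ring
  have := HasDerivAt.const_mul (1 / Real.sqrt (2 * Real.pi)) hu.exp
  refine this.congr_deriv ?_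
  unfold phi; ring

lemma key_cancel (η x : ℝ) :
    (1 - η) / Real.sqrt Real.pi * (Real.sqrt 2 * phi (Real.sqrt 2 * x))
      = 2 * (1 - η) * (phi x * phi x) := by
  unfold phi
  have h2 : Real.sqrt 2 * Real.sqrt 2 = 2 := Real.mul_self_sqrt (by norm_num)
  have hp : Real.sqrt Real.pi * Real.sqrt Real.pi = Real.pi := Real.mul_self_sqrt Real.pi_pos.le
  have hsq : Real.sqrt (2 * Real.pi) = Real.sqrt 2 * Real.sqrt Real.pi :=
    Real.sqrt_mul (by norm_num) _
  have harg : -(Real.sqrt 2 * x) ^ 2 / 2 = -x ^ 2 / 2 + -x ^ 2 / 2 := by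
    rw [mul_pow, sq, h2]; ring
  rw [harg, Real.exp_add, hsq]
  have h2p : (0:ℝ) < Real.sqrt 2 := by positivity
  have hpp : (0:ℝ) < Real.sqrt Real.pi := by positivity
  field_simp
  linear_combination (1 - η) * h2

noncomputable def Hfun (η : ℝ) (x : ℝ) : ℝ :=
  -phi x * (η + 2 * (1 - η) * Phi x)
    + (1 - η) / Real.sqrt Real.pi * Phi (Real.sqrt 2 * x)

lemma hasDerivAt_H (η x : ℝ) :
    HasDerivAt (Hfun η) (x * phi x * (η + 2 * (1 - η) * Phi x)) x := by
  have hc : HasDerivAt (fun x => Phi (Real.sqrt 2 * x))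
      (Real.sqrt 2 * phi (Real.sqrt 2 * x)) x := by
    have h := (hasDerivAt_Phi (Real.sqrt 2 * x)).comp x
      ((hasDerivAt_id x).const_mul (Real.sqrt 2))
    have h' : HasDerivAt (fun y => Phi (Real.sqrt 2 * y)) (phi (Real.sqrt 2 * x) * (Real.sqrt 2 * 1)) x := h
    convert h' using 1
    ring
  have h1 : HasDerivAt (fun x => -phi x * (η + 2 * (1 - η) * Phi x))
      (-(-x * phi x) * (η + 2 * (1 - η) * Phi x) + -phi x * (2 * (1 - η) * phi x)) x :=
    (hasDerivAt_phi x).neg.mul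
      ((HasDerivAt.const_mul (2 * (1 - η)) (hasDerivAt_Phi x)).const_add η)
  have h := h1.add (HasDerivAt.const_mul ((1 - η) / Real.sqrt Real.pi) hc)
  refine h.congr_deriv ?_
  linear_combination (key_cancel η x)

lemma integrable_f (η : ℝ) :
    Integrable (fun x => x * phi x * (η + 2 * (1 - η) * Phi x)) := by
  have hxphi : Integrable (fun x => x * phi x) := by
    have := (integrable_mul_exp_neg_mul_sq (by norm_num : (0:ℝ) < 1/2)).const_mul
      (1 / Real.sqrt (2 * Real.pi))
    refine this.congr (ae_of_all _ fun x => ?_)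
    unfold phi; ring_nf
  have hPhi_cont : Continuous Phi :=
    continuous_iff_continuousAt.2 fun x => (hasDerivAt_Phi x).continuousAt
  have hg : Integrable (fun x => (η + 2 * (1 - η) * Phi x) * (x * phi x)) := by
    refine hxphi.bdd_mul (c := |η| + |2 * (1 - η)|) ?_ ?_
    · exact (continuous_const.add (continuous_const.mul hPhi_cont)).aestronglyMeasurable
    · refine ae_of_all _ fun x => ?_
      have h0 := Phi_nonneg x
      have h1 := Phi_le_one x
      have : |2 * (1 - η) * Phi x| ≤ |2 * (1 - η)| := by
        rw [abs_mul]
        nlinarith [abs_nonneg (2 * (1 - η)), abs_of_nonneg h0]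
      calc ‖η + 2 * (1 - η) * Phi x‖ ≤ |η| + |2 * (1 - η) * Phi x| := abs_add_le _ _
        _ ≤ |η| + |2 * (1 - η)| := by linarith
  exact hg.congr (ae_of_all _ fun x => by ring)

lemma tendsto_H_atBot (η : ℝ) : Tendsto (Hfun η) atBot (nhds 0) := by
  have hg : Tendsto (fun x => η + 2 * (1 - η) * Phi x) atBot
      (nhds (η + 2 * (1 - η) * 0)) :=
    tendsto_const_nhds.add (tendsto_const_nhds.mul tendsto_Phi_atBot)
  have hmul : Tendsto (fun x : ℝ => Real.sqrt 2 * x) atBot atBot := by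
    apply Tendsto.const_mul_atBot (by positivity)
    exact tendsto_id
  have h2 : Tendsto (fun x => Phi (Real.sqrt 2 * x)) atBot (nhds 0) :=
    tendsto_Phi_atBot.comp hmul
  have h := (tendsto_phi_atBot.neg.mul hg).add (h2.const_mul ((1 - η) / Real.sqrt Real.pi))
  have heq : Hfun η = fun x => -phi x * (η + 2 * (1 - η) * Phi x)
      + (1 - η) / Real.sqrt Real.pi * Phi (Real.sqrt 2 * x) := rfl
  rw [heq]
  convert h using 2
  ring

lemma tendsto_H_atTop (η : ℝ) :
    Tendsto (Hfun η) atTop (nhds ((1 - η) / Real.sqrt Real.pi)) := by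
  have hg : Tendsto (fun x => η + 2 * (1 - η) * Phi x) atTop
      (nhds (η + 2 * (1 - η) * 1)) :=
    tendsto_const_nhds.add (tendsto_const_nhds.mul tendsto_Phi_atTop)
  have hmul : Tendsto (fun x : ℝ => Real.sqrt 2 * x) atTop atTop := by
    apply Tendsto.const_mul_atTop (by positivity)
    exact tendsto_id
  have h2 : Tendsto (fun x => Phi (Real.sqrt 2 * x)) atTop (nhds 1) :=
    tendsto_Phi_atTop.comp hmul
  have h := (tendsto_phi_atTop.neg.mul hg).add (h2.const_mul ((1 - η) / Real.sqrt Real.pi))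
  have heq : Hfun η = fun x => -phi x * (η + 2 * (1 - η) * Phi x)
      + (1 - η) / Real.sqrt Real.pi * Phi (Real.sqrt 2 * x) := rfl
  rw [heq]
  convert h using 2
  ring

theorem standardized_selection_pressure_linear_ranking (η : ℝ) :
    (∫ x : ℝ, x * ((1 / Real.sqrt (2 * Real.pi)) * Real.exp (-x ^ 2 / 2)) *
        (η + 2 * (1 - η) *
          ∫ y in Set.Iic x, (1 / Real.sqrt (2 * Real.pi)) * Real.exp (-y ^ 2 / 2)))
      = (1 - η) / Real.sqrt Real.pi := by
  have h := integral_of_hasDerivAt_of_tendsto (hasDerivAt_H η) (integrable_f η)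
    (tendsto_H_atBot η) (tendsto_H_atTop η)
  rw [sub_zero] at h
  rw [← h]
  rfl
end

section
/- The integral over the real line ∫_{-∞}^{∞} x · exp(−x²/2) · ( ∫_{-∞}^{x} exp(−y²/2) dy )² dx equals √2 · π. -/
open Real MeasureTheory

namespace GaussianCdfSq

noncomputable def f (x : ℝ) : ℝ := Real.exp (-x ^ 2 / 2)

noncomputable def F (x : ℝ) : ℝ := ∫ y in Set.Iic x, f y

lemma f_eq (x : ℝ) : f x = Real.exp (-(1/2 : ℝ) * x ^ 2) := by
  unfold f; ring_nf

lemma f_even (x : ℝ) : f (-x) = f x := by unfold f; ring_nf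

lemma f_pos (x : ℝ) : 0 < f x := Real.exp_pos _

lemma hf_int : Integrable f := by
  have h := integrable_exp_neg_mul_sq (b := (1/2 : ℝ)) (by norm_num)
  apply h.congr
  filter_upwards with x
  unfold f; congr 1; ring

lemma hf_cont : Continuous f := by
  unfold f; fun_prop

lemma hxf_int : Integrable (fun x : ℝ => x * f x) := by
  have h := integrable_mul_exp_neg_mul_sq (b := (1/2 : ℝ)) (by norm_num)
  apply h.congr
  filter_upwards with x
  unfold f; congr 1; ring

lemma ff_eq (x : ℝ) : f x * f x = Real.exp (-(1:ℝ) * x ^ 2) := by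
  unfold f; rw [← Real.exp_add]; ring_nf

lemma hff_int : Integrable (fun x : ℝ => f x * f x) := by
  have h := integrable_exp_neg_mul_sq (b := (1 : ℝ)) (by norm_num)
  apply h.congr
  filter_upwards with x
  rw [ff_eq]

lemma F_nonneg (x : ℝ) : 0 ≤ F x :=
  setIntegral_nonneg measurableSet_Iic fun y _ => (f_pos y).le

lemma F_le (x : ℝ) : F x ≤ ∫ y : ℝ, f y :=
  setIntegral_le_integral hf_int (Filter.Eventually.of_forall fun y => (f_pos y).le)

lemma F_bound (x : ℝ) : ‖F x‖ ≤ ∫ y : ℝ, f y := by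
  rw [Real.norm_eq_abs, abs_of_nonneg (F_nonneg x)]; exact F_le x

lemma F_eq (x : ℝ) : F x = F 0 + ∫ y in (0:ℝ)..x, f y := by
  rw [eq_comm, add_comm, ← eq_sub_iff_add_eq, ← intervalIntegral.integral_Iic_sub_Iic
    hf_int.integrableOn hf_int.integrableOn]
  rfl

lemma F_hasDeriv (x : ℝ) : HasDerivAt F (f x) x := by
  have h : HasDerivAt (fun u => ∫ y in (0:ℝ)..u, f y) (f x) x :=
    intervalIntegral.integral_hasDerivAt_right hf_int.intervalIntegrable
      (hf_cont.stronglyMeasurableAtFilter _ _) hf_cont.continuousAt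
  have := h.const_add (F 0)
  apply this.congr_of_eventuallyEq
  filter_upwards with y using F_eq y

lemma F_cont : Continuous F :=
  continuous_iff_continuousAt.mpr fun x => (F_hasDeriv x).continuousAt

lemma v_hasDeriv (x : ℝ) : HasDerivAt (fun t : ℝ => -f t) (x * f x) x := by
  have h1 : HasDerivAt (fun t : ℝ => -t ^ 2 / 2) (-x) x := by
    have := ((hasDerivAt_pow 2 x).neg).div_const 2
    exact this.congr_deriv (by push_cast; ring)
  have h2 := (h1.exp).neg
  exact h2.congr_deriv (by unfold f; ring)

lemma F_odd_part (x : ℝ) : (∫ y in (0:ℝ)..(-x), f y) = -∫ y in (0:ℝ)..x, f y := by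
  have h : (∫ y in (0:ℝ)..x, f (-y)) = ∫ y in -x..(0:ℝ), f y := by
    simpa using intervalIntegral.integral_comp_neg (a := (0:ℝ)) (b := x) (f := f)
  simp only [f_even] at h
  rw [intervalIntegral.integral_symm, ← h]

lemma F_zero : F 0 = Real.sqrt (2 * Real.pi) / 2 := by
  have h : (∫ y in Set.Iic (0:ℝ), f (-y)) = ∫ y in Set.Ioi (0:ℝ), f y := by
    simpa using integral_comp_neg_Iic (0:ℝ) f
  simp only [f_even] at h
  have h2 : (∫ y in Set.Ioi (0:ℝ), f y) = Real.sqrt (Real.pi / (1/2)) / 2 := by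
    rw [← integral_gaussian_Ioi (1/2)]
    apply setIntegral_congr_fun measurableSet_Ioi
    intro y _; rw [f_eq]
  rw [F, h, h2]
  norm_num [mul_comm]

end GaussianCdfSq

open GaussianCdfSq in
theorem gaussian_cdf_squared_integral_identity :
    (∫ x : ℝ, x * Real.exp (-x ^ 2 / 2) *
        (∫ y in Set.Iic x, Real.exp (-y ^ 2 / 2)) ^ 2)
      = Real.sqrt 2 * Real.pi := by
  have goal_eq : (∫ x : ℝ, x * Real.exp (-x ^ 2 / 2) *
        (∫ y in Set.Iic x, Real.exp (-y ^ 2 / 2)) ^ 2)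
      = ∫ x : ℝ, (F x ^ 2) * (x * f x) := by
    congr 1; funext x; unfold F f; ring
  rw [goal_eq]
  -- integration by parts: u = F^2, v = -f
  set C := ∫ y : ℝ, f y with hC
  have hFmeas : AEStronglyMeasurable F volume := F_cont.aestronglyMeasurable
  have hu : ∀ x, HasDerivAt (fun t => F t ^ 2) (2 * F x * f x) x := by
    intro x
    have := (F_hasDeriv x).pow 2
    exact this.congr_deriv (by push_cast; ring)
  have hF2bdd : ∃ M, ∀ x : ℝ, ‖F x ^ 2‖ ≤ M := by
    refine ⟨C ^ 2, fun x => ?_⟩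
    rw [norm_pow]
    apply pow_le_pow_left₀ (norm_nonneg _) (F_bound x)
  have huv' : Integrable (fun x => (F x ^ 2) * (x * f x)) :=
    hxf_int.bdd_mul (hFmeas.pow 2) (Filter.Eventually.of_forall hF2bdd.choose_spec)
  have hu'v : Integrable (fun x => (2 * F x * f x) * (-f x)) := by
    have : Integrable (fun x => (-2 * F x) * (f x * f x)) :=
      hff_int.bdd_mul ((aestronglyMeasurable_const.mul hFmeas))
        (Filter.Eventually.of_forall (fun x => show ‖-2 * F x‖ ≤ 2 * C by
          rw [norm_mul]
          have : ‖(-2 : ℝ)‖ = 2 := by norm_num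
          rw [this]
          have hC0 : (0:ℝ) ≤ 2 := by norm_num
          exact mul_le_mul_of_nonneg_left (F_bound x) hC0))
    apply this.congr
    filter_upwards with x; ring
  have huv : Integrable (fun x => (F x ^ 2) * (-f x)) :=
    (hf_int.neg).bdd_mul (hFmeas.pow 2) (Filter.Eventually.of_forall hF2bdd.choose_spec)
  have ibp := MeasureTheory.integral_mul_deriv_eq_deriv_mul_of_integrable
    (u := fun t => F t ^ 2) (u' := fun x => 2 * F x * f x)
    (v := fun t => -f t) (v' := fun x => x * f x)
    (fun x _ => hu x) (fun x _ => v_hasDeriv x) huv' hu'v huv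
  rw [ibp, ← integral_neg]
  have step2 : ∀ x : ℝ, -((2 * F x * f x) * (-f x))
      = 2 * F 0 * (f x * f x) + (2 * (∫ y in (0:ℝ)..x, f y)) * (f x * f x) := by
    intro x
    rw [F_eq x]; ring
  rw [integral_congr_ae (Filter.Eventually.of_forall step2)]
  have hint1 : Integrable (fun x : ℝ => 2 * F 0 * (f x * f x)) :=
    hff_int.const_mul _
  have hAbdd : ∃ M, ∀ x : ℝ, ‖2 * ∫ y in (0:ℝ)..x, f y‖ ≤ M := by
    refine ⟨2 * (C + C), fun x => ?_⟩
    rw [norm_mul]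
    have h2 : ‖(2:ℝ)‖ = 2 := by norm_num
    rw [h2]
    apply mul_le_mul_of_nonneg_left _ (by norm_num : (0:ℝ) ≤ 2)
    have := F_eq x
    have hx : (∫ y in (0:ℝ)..x, f y) = F x - F 0 := by rw [this]; ring
    rw [hx]
    calc ‖F x - F 0‖ ≤ ‖F x‖ + ‖F 0‖ := norm_sub_le _ _
      _ ≤ C + C := add_le_add (F_bound x) (F_bound 0)
  have hAmeas : AEStronglyMeasurable (fun x : ℝ => 2 * ∫ y in (0:ℝ)..x, f y) volume := by
    have : Continuous (fun x : ℝ => ∫ y in (0:ℝ)..x, f y) :=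
      (F_cont.sub (continuous_const (y := F 0))).congr (fun x => by show F x - F 0 = _; rw [F_eq x]; ring)
    exact (continuous_const.mul this).aestronglyMeasurable
  have hint2 : Integrable (fun x : ℝ => (2 * ∫ y in (0:ℝ)..x, f y) * (f x * f x)) :=
    hff_int.bdd_mul hAmeas (Filter.Eventually.of_forall hAbdd.choose_spec)
  rw [integral_add hint1 hint2]
  have hodd : (∫ x : ℝ, (2 * ∫ y in (0:ℝ)..x, f y) * (f x * f x)) = 0 := by
    set g := fun x : ℝ => (2 * ∫ y in (0:ℝ)..x, f y) * (f x * f x) with hg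
    have hneg : ∀ x, g (-x) = -g x := by
      intro x
      simp only [hg]
      rw [F_odd_part, f_even]
      ring
    have h1 : (∫ x : ℝ, g (-x)) = ∫ x : ℝ, g x := integral_neg_eq_self g volume
    rw [integral_congr_ae (Filter.Eventually.of_forall hneg)] at h1
    rw [integral_neg] at h1
    linarith
  rw [hodd, add_zero, integral_const_mul]
  have hffI : (∫ x : ℝ, f x * f x) = Real.sqrt Real.pi := by
    have := integral_gaussian (1:ℝ)
    simp only [← ff_eq] at this
    rw [this]; norm_num
  rw [hffI, F_zero]
  rw [Real.sqrt_mul (by norm_num : (0:ℝ) ≤ 2)]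
  rw [mul_comm (Real.sqrt 2) (Real.sqrt Real.pi)] -- just to set up
  have hpi : Real.sqrt Real.pi * Real.sqrt Real.pi = Real.pi :=
    Real.mul_self_sqrt Real.pi_pos.le
  field_simp
  ring_nf
  rw [mul_comm] at hpi
  nlinarith [hpi, Real.sqrt_nonneg Real.pi, Real.sqrt_nonneg 2]
end
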